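/- Let S be a commutative ring and I an ideal of S such that S is I-adically complete (i.e., I-adically Hausdorff and complete). Let A be a free S-module with a finite basis of cardinality n, equipped with a commutative and associative S-bilinear multiplication. Suppose a_1,…,a_n ∈ A are elements such that a_i·a_j − δ_{ij}·a_i ∈ I·A for all i,j, and such that the images of a_1,…,a_n in A/IA form a basis of A/IA over S/I. Then there exist unique elements ξ_1,…,ξ_n ∈ A with ξ_i ≡ a_i (mod I·A) and ξ_i·ξ_j = δ_{ij}·ξ_i for all i,j; moreover ξ_1,…,ξ_n form an S-basis of A, so A is isomorphic as an S-algebra to the product algebra S^n. -/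

import Mathlib

open Submodule

section IBL

variable {S : Type*} [CommRing S] {A : Type*} [AddCommGroup A] [Module S A]

lemma IBL.smul_top (P : Ideal S) : (P • ⊤ : Submodule S S) = P := by
  rw [Ideal.smul_eq_mul, Ideal.mul_top]

lemma IBL.repr_mem {n : ℕ} (bA : Module.Basis (Fin n) S A) (P : Ideal S) {x : A}
    (hx : x ∈ P • (⊤ : Submodule S A)) (i : Fin n) : bA.repr x i ∈ P := by
  refine Submodule.smul_induction_on hx (fun r hr z _ => ?_) (fun u v hu hv => ?_)
  · rw [map_smul, Finsupp.smul_apply, smul_eq_mul]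
    exact P.mul_mem_right _ hr
  · rw [map_add, Finsupp.add_apply]
    exact P.add_mem hu hv

lemma IBL.mem_of_repr {n : ℕ} (bA : Module.Basis (Fin n) S A) (P : Ideal S) {x : A}
    (h : ∀ i, bA.repr x i ∈ P) : x ∈ P • (⊤ : Submodule S A) := by
  rw [← bA.sum_repr x]
  exact sum_mem fun i _ => smul_mem_smul (h i) mem_top

variable (mul : A →ₗ[S] A →ₗ[S] A)

lemma IBL.mul_mem_right (x : A) {P : Ideal S} {y : A} (hy : y ∈ P • (⊤ : Submodule S A)) :
    mul x y ∈ P • (⊤ : Submodule S A) := by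
  refine Submodule.smul_induction_on hy (fun r hr z _ => ?_) (fun u v hu hv => ?_)
  · rw [map_smul]
    exact smul_mem_smul hr mem_top
  · rw [map_add]
    exact add_mem hu hv

lemma IBL.mul_mem_left {P : Ideal S} {y : A} (hy : y ∈ P • (⊤ : Submodule S A)) (x : A) :
    mul y x ∈ P • (⊤ : Submodule S A) := by
  refine Submodule.smul_induction_on hy (fun r hr z _ => ?_) (fun u v hu hv => ?_)
  · rw [map_smul, LinearMap.smul_apply]
    exact smul_mem_smul hr mem_top
  · rw [map_add, LinearMap.add_apply]
    exact add_mem hu hv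

lemma IBL.mul_mem_mul {P Q : Ideal S} {x y : A} (hx : x ∈ P • (⊤ : Submodule S A))
    (hy : y ∈ Q • (⊤ : Submodule S A)) : mul x y ∈ (P * Q) • (⊤ : Submodule S A) := by
  rw [← Ideal.smul_eq_mul, Submodule.smul_assoc]
  refine Submodule.smul_induction_on hx (fun r hr z _ => ?_) (fun u v hu hv => ?_)
  · rw [map_smul, LinearMap.smul_apply]
    exact smul_mem_smul hr (IBL.mul_mem_right mul z hy)
  · rw [map_add, LinearMap.add_apply]
    exact add_mem hu hv

lemma IBL.nsmul_mem (N : Submodule S A) (c : ℕ) {z : A} (h : z ∈ N) : c • z ∈ N :=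
  N.toAddSubmonoid.nsmul_mem h c

/-- q x k = x^(k+1) -/
def IBL.qpow (x : A) : ℕ → A
  | 0 => x
  | (k + 1) => mul x (IBL.qpow x k)

lemma IBL.q_mul (hassoc : ∀ x y z : A, mul (mul x y) z = mul x (mul y z)) (x : A) :
    ∀ a b : ℕ, mul (IBL.qpow mul x a) (IBL.qpow mul x b) = IBL.qpow mul x (a + b + 1) := by
  intro a
  induction a with
  | zero => intro b; simp [IBL.qpow]
  | succ a ih =>
    intro b
    show mul (mul x (IBL.qpow mul x a)) (IBL.qpow mul x b) = _
    rw [hassoc, ih b]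
    show IBL.qpow mul x (a + b + 1 + 1) = _
    congr 1
    omega

lemma IBL.newton_step_id (hassoc : ∀ x y z : A, mul (mul x y) z = mul x (mul y z)) (y : A) :
    (3 • mul y y - 2 • mul y (mul y y)) - y
      = (mul y y - y) - 2 • mul y (mul y y - y) := by
  have h0 : y = IBL.qpow mul y 0 := rfl
  rw [h0]
  simp only [map_sub, map_nsmul, LinearMap.sub_apply, LinearMap.smul_apply, smul_sub,
    IBL.q_mul mul hassoc]
  norm_num
  abel

lemma IBL.newton_defect_id (hassoc : ∀ x y z : A, mul (mul x y) z = mul x (mul y z)) (y : A) :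
    mul (3 • mul y y - 2 • mul y (mul y y)) (3 • mul y y - 2 • mul y (mul y y))
      - (3 • mul y y - 2 • mul y (mul y y))
    = 4 • mul (mul y y - y) (mul (mul y y - y) (mul y y))
      - 4 • mul (mul y y - y) (mul (mul y y - y) y)
      - 3 • mul (mul y y - y) (mul y y - y) := by
  have h0 : y = IBL.qpow mul y 0 := rfl
  rw [h0]
  simp only [map_sub, map_nsmul, LinearMap.sub_apply, LinearMap.smul_apply, smul_sub,
    IBL.q_mul mul hassoc, smul_smul]
  norm_num
  abel

lemma IBL.sq_id (hcomm : ∀ x y : A, mul x y = mul y x)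
    (hassoc : ∀ x y z : A, mul (mul x y) z = mul x (mul y z)) (u v : A) :
    mul (mul u v) (mul u v) = mul (mul u u) (mul v v) := by
  rw [hassoc u v (mul u v), ← hassoc v u v, hcomm v u, hassoc u v v, ← hassoc u u (mul v v)]

lemma IBL.cube_id (hcomm : ∀ x y : A, mul x y = mul y x)
    (hassoc : ∀ x y z : A, mul (mul x y) z = mul x (mul y z)) (u v : A)
    (hu : mul u u = u) (hv : mul v v = v) :
    mul (u - v) (mul (u - v) (u - v)) = u - v := by
  have h1 : mul u (mul u v) = mul u v := by rw [← hassoc, hu]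
  have h2 : mul v (mul u v) = mul u v := by rw [hcomm u v, ← hassoc, hv, hcomm]
  simp only [map_sub, LinearMap.sub_apply, hu, hv, hcomm v u, h1, h2]
  abel

/-- Newton iteration for idempotents. -/
def IBL.newt (x : A) : ℕ → A
  | 0 => x
  | (k + 1) =>
    3 • mul (IBL.newt x k) (IBL.newt x k)
      - 2 • mul (IBL.newt x k) (mul (IBL.newt x k) (IBL.newt x k))

variable (I : Ideal S)

lemma IBL.pow_smul_mono {p q : ℕ} (h : p ≤ q) :
    (I ^ q • ⊤ : Submodule S A) ≤ (I ^ p • ⊤ : Submodule S A) :=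
  smul_mono_left (Ideal.pow_le_pow_right h)

variable (hassoc : ∀ x y z : A, mul (mul x y) z = mul x (mul y z))
include hassoc

lemma IBL.newt_defect {x : A} (hx : mul x x - x ∈ (I • ⊤ : Submodule S A)) :
    ∀ k, mul (IBL.newt mul x k) (IBL.newt mul x k) - IBL.newt mul x k
      ∈ (I ^ (2 ^ k) • ⊤ : Submodule S A) := by
  intro k
  induction k with
  | zero => simpa [IBL.newt] using hx
  | succ k ih =>
    set w := IBL.newt mul x k with hw
    have e : IBL.newt mul x (k + 1)
        = 3 • mul w w - 2 • mul w (mul w w) := by rw [IBL.newt]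
    rw [e, IBL.newton_defect_id mul hassoc w]
    have h2 : ∀ z : A, mul (mul w w - w) (mul (mul w w - w) z)
        ∈ (I ^ (2 ^ (k + 1)) • ⊤ : Submodule S A) := by
      intro z
      have := IBL.mul_mem_mul mul ih (IBL.mul_mem_left mul ih z)
      rwa [← pow_add, ← two_mul, ← pow_succ'] at this
    have h3 : mul (mul w w - w) (mul w w - w) ∈ (I ^ (2 ^ (k + 1)) • ⊤ : Submodule S A) := by
      have := IBL.mul_mem_mul mul ih ih
      rwa [← pow_add, ← two_mul, ← pow_succ'] at this
    exact sub_mem (sub_mem (IBL.nsmul_mem _ _ (h2 _)) (IBL.nsmul_mem _ _ (h2 _)))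
      (IBL.nsmul_mem _ _ h3)

lemma IBL.newt_step {x : A} (hx : mul x x - x ∈ (I • ⊤ : Submodule S A)) (k : ℕ) :
    IBL.newt mul x (k + 1) - IBL.newt mul x k ∈ (I ^ (2 ^ k) • ⊤ : Submodule S A) := by
  set w := IBL.newt mul x k with hw
  have e : IBL.newt mul x (k + 1) = 3 • mul w w - 2 • mul w (mul w w) := by rw [IBL.newt]
  rw [e, IBL.newton_step_id mul hassoc w]
  exact sub_mem (IBL.newt_defect mul I hassoc hx k)
    (IBL.nsmul_mem _ _ (IBL.mul_mem_right mul _ (IBL.newt_defect mul I hassoc hx k)))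

lemma IBL.newt_cauchy {x : A} (hx : mul x x - x ∈ (I • ⊤ : Submodule S A)) :
    ∀ {m k : ℕ}, m ≤ k →
      IBL.newt mul x k - IBL.newt mul x m ∈ (I ^ (2 ^ m) • ⊤ : Submodule S A) := by
  intro m k hmk
  induction k with
  | zero =>
    have h0 : m = 0 := Nat.le_zero.mp hmk
    subst h0; simpa using zero_mem _
  | succ k ih =>
    rcases Nat.lt_or_ge m (k + 1) with h | h
    · have hmk' : m ≤ k := Nat.lt_succ_iff.mp h
      have h1 := IBL.newt_step mul I hassoc hx k
      have h2 := ih hmk'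
      have h1' : IBL.newt mul x (k + 1) - IBL.newt mul x k
          ∈ (I ^ (2 ^ m) • ⊤ : Submodule S A) :=
        IBL.pow_smul_mono I (Nat.pow_le_pow_right (by norm_num) hmk') h1
      have h3 := add_mem h1' h2
      simpa using h3
    · have h0 : m = k + 1 := le_antisymm hmk h
      subst h0; simpa using zero_mem _

omit hassoc

variable [IsAdicComplete I S]

lemma IBL.hausA {n : ℕ} (bA : Module.Basis (Fin n) S A) {x : A}
    (hx : ∀ m : ℕ, x ∈ (I ^ (m + 1) • ⊤ : Submodule S A)) : x = 0 := by
  have h : ∀ i, bA.repr x i = 0 := by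
    intro i
    refine IsHausdorff.haus (inferInstance : IsHausdorff I S) _ fun m => SModEq.zero.2 ?_
    rw [IBL.smul_top]
    match m with
    | 0 => simp
    | (k + 1) => exact IBL.repr_mem bA _ (hx k) i
  have h2 : bA.repr x = 0 := Finsupp.ext h
  exact bA.repr.map_eq_zero_iff.mp h2

lemma IBL.precA {n : ℕ} (bA : Module.Basis (Fin n) S A) (f : ℕ → A)
    (hf : ∀ {m k : ℕ}, m ≤ k → f k - f m ∈ (I ^ m • ⊤ : Submodule S A)) :
    ∃ L : A, ∀ m, f m - L ∈ (I ^ m • ⊤ : Submodule S A) := by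
  have key : ∀ i : Fin n, ∃ c : S, ∀ m, bA.repr (f m) i - c ∈ I ^ m := by
    intro i
    have compat : ∀ {m k : ℕ}, m ≤ k →
        (fun m => bA.repr (f m) i) m ≡ (fun m => bA.repr (f m) i) k
          [SMOD (I ^ m • ⊤ : Submodule S S)] := by
      intro m k hmk
      rw [SModEq.sub_mem, IBL.smul_top]
      have h2 := IBL.repr_mem bA (I ^ m) (hf hmk) i
      rw [map_sub, Finsupp.sub_apply] at h2
      have h3 := (I ^ m).neg_mem h2
      rwa [neg_sub] at h3
    obtain ⟨L, hL⟩ := IsPrecomplete.prec (inferInstance : IsPrecomplete I S) compat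
    refine ⟨L, fun m => ?_⟩
    have h4 := SModEq.sub_mem.1 (hL m)
    rwa [IBL.smul_top] at h4
  choose c hc using key
  refine ⟨∑ i, c i • bA i, fun m => IBL.mem_of_repr bA _ fun i => ?_⟩
  have hrepr : bA.repr (∑ j, c j • bA j) i = c i := by
    simp [Module.Basis.repr_self, Finsupp.single_apply]
  rw [map_sub, Finsupp.sub_apply, hrepr]
  exact hc i m

end IBL

/-- lifting an idempotent basis along an adically complete base. If `S` is
`I`-adically complete, `A` is a free `S`-module with a basis of cardinality `n` carrying a
commutative associative `S`-bilinear multiplication, and `a₁,…,aₙ` are orthogonal idempotents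
modulo `I·A` whose images form a basis of `A/IA` over `S/I`, then there exist unique
`ξ₁,…,ξₙ ∈ A` with `ξᵢ ≡ aᵢ (mod I·A)` and `ξᵢ·ξⱼ = δᵢⱼ·ξᵢ`; moreover the `ξᵢ` form an
`S`-basis of `A`, so `A` is isomorphic as an `S`-algebra to the product algebra `Sⁿ`. -/
theorem idempotent_basis_lift {S : Type*} [CommRing S] (I : Ideal S) [IsAdicComplete I S]
    {A : Type*} [AddCommGroup A] [Module S A] {n : ℕ} (bA : Module.Basis (Fin n) S A)
    (mul : A →ₗ[S] A →ₗ[S] A)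
    (hcomm : ∀ x y : A, mul x y = mul y x)
    (hassoc : ∀ x y z : A, mul (mul x y) z = mul x (mul y z))
    (a : Fin n → A)
    (hidem : ∀ i j : Fin n,
      mul (a i) (a j) - (if i = j then a i else 0) ∈ (I • ⊤ : Submodule S A))
    (hbasis : ∃ bq : Module.Basis (Fin n) (S ⧸ I) (A ⧸ (I • ⊤ : Submodule S A)),
      ∀ i, bq i = Submodule.Quotient.mk (a i)) :
    (∃! ξ : Fin n → A,
      (∀ i, ξ i - a i ∈ (I • ⊤ : Submodule S A)) ∧
      (∀ i j, mul (ξ i) (ξ j) = if i = j then ξ i else 0)) ∧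
    (∀ ξ : Fin n → A,
      (∀ i, ξ i - a i ∈ (I • ⊤ : Submodule S A)) →
      (∀ i j, mul (ξ i) (ξ j) = if i = j then ξ i else 0) →
      ∃ b : Module.Basis (Fin n) S A, (∀ i, b i = ξ i) ∧
        ∃ e : A ≃ₗ[S] (Fin n → S), ∀ x y : A, e (mul x y) = e x * e y) := by
  classical
  have hA1 : ∀ i, mul (a i) (a i) - a i ∈ (I • ⊤ : Submodule S A) := fun i => by
    simpa using hidem i i
  -- construct the limits ξ i of the Newton iterations
  have key : ∀ i : Fin n, ∃ L : A,
      ∀ m, IBL.newt mul (a i) m - L ∈ (I ^ m • ⊤ : Submodule S A) := by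
    intro i
    refine IBL.precA I bA _ ?_
    intro m k hmk
    exact IBL.pow_smul_mono I (le_of_lt (Nat.lt_two_pow_self (n := m)))
      (IBL.newt_cauchy mul I hassoc (hA1 i) hmk)
  choose ξ hξ using key
  have hximod : ∀ i, ξ i - a i ∈ (I • ⊤ : Submodule S A) := by
    intro i
    have h1 := hξ i 1
    have h2 := IBL.newt_step mul I hassoc (hA1 i) 0
    have e : ξ i - a i
        = -(IBL.newt mul (a i) 1 - ξ i) + (IBL.newt mul (a i) 1 - IBL.newt mul (a i) 0) := by
      show ξ i - a i = -(IBL.newt mul (a i) 1 - ξ i) + (IBL.newt mul (a i) 1 - a i)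
      abel
    rw [e]
    refine add_mem (neg_mem ?_) ?_
    · simpa [pow_one] using h1
    · simpa [pow_one] using h2
  have hxiidem : ∀ i, mul (ξ i) (ξ i) = ξ i := by
    intro i
    have hmem : ∀ m : ℕ, mul (ξ i) (ξ i) - ξ i ∈ (I ^ (m + 1) • ⊤ : Submodule S A) := by
      intro m
      set w := IBL.newt mul (a i) (m + 1) with hw
      have hwξ : w - ξ i ∈ (I ^ (m + 1) • ⊤ : Submodule S A) := hξ i (m + 1)
      have hdef : mul w w - w ∈ (I ^ (m + 1) • ⊤ : Submodule S A) :=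
        IBL.pow_smul_mono I (le_of_lt (Nat.lt_two_pow_self (n := m + 1)))
          (IBL.newt_defect mul I hassoc (hA1 i) (m + 1))
      have e : mul (ξ i) (ξ i) - ξ i
          = mul (ξ i) (ξ i - w) + mul (ξ i - w) w + (mul w w - w) + (w - ξ i) := by
        simp only [map_sub, LinearMap.sub_apply]
        abel
      rw [e]
      have hsub : ξ i - w ∈ (I ^ (m + 1) • ⊤ : Submodule S A) := by
        have h5 := neg_mem hwξ; rwa [neg_sub] at h5
      exact add_mem (add_mem (add_mem (IBL.mul_mem_right mul _ hsub)
        (IBL.mul_mem_left mul hsub w)) hdef) hwξ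
    exact sub_eq_zero.mp (IBL.hausA I bA hmem)
  have hxiorth : ∀ i j, i ≠ j → mul (ξ i) (ξ j) = 0 := by
    intro i j hij
    have hg1 : mul (ξ i) (ξ j) ∈ (I • ⊤ : Submodule S A) := by
      have e : mul (ξ i) (ξ j)
          = (mul (a i) (a j) - (if i = j then a i else 0)) + mul (a i) (ξ j - a j)
            + mul (ξ i - a i) (ξ j) := by
        rw [if_neg hij]
        simp only [map_sub, LinearMap.sub_apply, sub_zero]
        abel
      rw [e]
      exact add_mem (add_mem (hidem i j) (IBL.mul_mem_right mul _ (hximod j)))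
        (IBL.mul_mem_left mul (hximod i) _)
    have hgsq : mul (mul (ξ i) (ξ j)) (mul (ξ i) (ξ j)) = mul (ξ i) (ξ j) := by
      rw [IBL.sq_id mul hcomm hassoc, hxiidem i, hxiidem j]
    have hall : ∀ m : ℕ, mul (ξ i) (ξ j) ∈ (I ^ (m + 1) • ⊤ : Submodule S A) := by
      intro m
      induction m with
      | zero => simpa [pow_one] using hg1
      | succ m ih =>
        have h6 := IBL.mul_mem_mul mul ih ih
        rw [← pow_add, hgsq] at h6
        exact IBL.pow_smul_mono I (by omega) h6
    exact IBL.hausA I bA hall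
  have horth : ∀ i j, mul (ξ i) (ξ j) = if i = j then ξ i else 0 := by
    intro i j
    by_cases h : i = j
    · subst h; rw [if_pos rfl]; exact hxiidem i
    · rw [if_neg h]; exact hxiorth i j h
  have huniq : ∀ ζ : Fin n → A, (∀ i, ζ i - a i ∈ (I • ⊤ : Submodule S A)) →
      (∀ i j, mul (ζ i) (ζ j) = if i = j then ζ i else 0) → ζ = ξ := by
    intro ζ h1 h2
    funext i
    have hu : mul (ζ i) (ζ i) = ζ i := by simpa using h2 i i
    have hv : mul (ξ i) (ξ i) = ξ i := hxiidem i
    have hd1 : ζ i - ξ i ∈ (I • ⊤ : Submodule S A) := by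
      have e : ζ i - ξ i = (ζ i - a i) - (ξ i - a i) := by abel
      rw [e]; exact sub_mem (h1 i) (hximod i)
    have hcube := IBL.cube_id mul hcomm hassoc (ζ i) (ξ i) hu hv
    have hall : ∀ m : ℕ, ζ i - ξ i ∈ (I ^ (m + 1) • ⊤ : Submodule S A) := by
      intro m
      induction m with
      | zero => simpa [pow_one] using hd1
      | succ m ih =>
        have h3 := IBL.mul_mem_mul mul ih (IBL.mul_mem_mul mul ih ih)
        rw [← pow_add, ← pow_add, hcube] at h3
        exact IBL.pow_smul_mono I (by omega) h3
    exact sub_eq_zero.mp (IBL.hausA I bA hall)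
  constructor
  · exact ⟨ξ, ⟨hximod, horth⟩, fun ζ hζ => huniq ζ hζ.1 hζ.2⟩
  -- basis and algebra isomorphism
  intro ζ hmod horthζ
  obtain ⟨bq, hbq⟩ := hbasis
  have htop : (⊤ : Submodule S A) ≤ span S (Set.range ζ) ⊔ (I • ⊤ : Submodule S A) := by
    intro x _
    have hrepr := bq.sum_repr (Submodule.Quotient.mk x : A ⧸ (I • ⊤ : Submodule S A))
    choose s hs using fun i =>
      Ideal.Quotient.mk_surjective (I := I) (bq.repr (Submodule.Quotient.mk x) i)
    have hmk : (Submodule.Quotient.mk (∑ i, s i • a i) : A ⧸ (I • ⊤ : Submodule S A))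
        = Submodule.Quotient.mk x := by
      rw [← hrepr]
      have hsum : (Submodule.Quotient.mk (∑ i, s i • a i) : A ⧸ (I • ⊤ : Submodule S A))
          = ∑ i, (Submodule.Quotient.mk (s i • a i) : A ⧸ (I • ⊤ : Submodule S A)) := by
        simp only [← Submodule.mkQ_apply, map_sum]
      rw [hsum]
      refine Finset.sum_congr rfl fun i _ => ?_
      rw [← Module.Quotient.mk_smul_mk, hs i, ← hbq i]
    have hxa : x - (∑ i, s i • a i) ∈ (I • ⊤ : Submodule S A) := by
      rw [← Submodule.Quotient.eq]
      exact hmk.symm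
    refine mem_sup.2 ⟨∑ i, s i • ζ i,
      sum_mem fun i _ => smul_mem _ _ (subset_span ⟨i, rfl⟩),
      x - ∑ i, s i • ζ i, ?_, by abel⟩
    have e : x - ∑ i, s i • ζ i
        = (x - ∑ i, s i • a i) + ∑ i, (s i • a i - s i • ζ i) := by
      rw [Finset.sum_sub_distrib]
      abel
    rw [e]
    refine add_mem hxa (sum_mem fun i _ => ?_)
    have h7 : a i - ζ i ∈ (I • ⊤ : Submodule S A) := by
      have := neg_mem (hmod i); rwa [neg_sub] at this
    have h8 : s i • a i - s i • ζ i = s i • (a i - ζ i) := by rw [smul_sub]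
    rw [h8]
    exact smul_mem _ _ h7
  have hspan : span S (Set.range ζ) = ⊤ := by
    have hfg : (⊤ : Submodule S A).FG := Module.finite_def.mp (Module.Finite.of_basis bA)
    exact le_antisymm le_top
      (Submodule.le_of_le_smul_of_le_jacobson_bot hfg (IsAdicComplete.le_jacobson_bot I) htop)
  set φ : (Fin n → S) →ₗ[S] A := Fintype.linearCombination S ζ with hφdef
  have hφsingle : ∀ i, φ (Pi.single i 1) = ζ i := fun i => by
    rw [hφdef, Fintype.linearCombination_apply_single, one_smul]
  have hφsurj : Function.Surjective φ := by
    intro x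
    have hx : x ∈ span S (Set.range ζ) := hspan ▸ mem_top
    have hle : span S (Set.range ζ) ≤ LinearMap.range φ := by
      rw [span_le]
      rintro y ⟨i, rfl⟩
      exact ⟨Pi.single i 1, hφsingle i⟩
    exact hle hx
  haveI : Module.Finite S A := Module.Finite.of_basis bA
  have hcs : Function.Surjective ⇑(φ ∘ₗ bA.equivFun.toLinearMap) := by
    rw [LinearMap.coe_comp, LinearEquiv.coe_coe]
    exact hφsurj.comp bA.equivFun.surjective
  have hψinj : Function.Injective ⇑(φ ∘ₗ bA.equivFun.toLinearMap) :=
    OrzechProperty.injective_of_surjective_endomorphism _ hcs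
  have hφinj : Function.Injective φ := by
    have heq : (φ : (Fin n → S) → A)
        = ⇑(φ ∘ₗ bA.equivFun.toLinearMap) ∘ ⇑bA.equivFun.symm := by
      funext u
      simp only [Function.comp_apply, LinearMap.coe_comp, LinearEquiv.coe_coe,
        LinearEquiv.apply_symm_apply]
    rw [heq]
    exact hψinj.comp bA.equivFun.symm.injective
  set eqv : (Fin n → S) ≃ₗ[S] A := LinearEquiv.ofBijective φ ⟨hφinj, hφsurj⟩ with heqv
  set b : Module.Basis (Fin n) S A := (Pi.basisFun S (Fin n)).map eqv with hbdef
  have hb : ∀ i, b i = ζ i := by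
    intro i
    rw [hbdef, Module.Basis.map_apply, Pi.basisFun_apply]
    show φ (Pi.single i 1) = ζ i
    exact hφsingle i
  refine ⟨b, hb, b.equivFun, ?_⟩
  have hbil : LinearMap.compr₂ mul b.equivFun.toLinearMap
      = (LinearMap.mul S (Fin n → S)).compl₁₂ b.equivFun.toLinearMap b.equivFun.toLinearMap := by
    refine b.ext fun i => b.ext fun j => ?_
    simp only [LinearMap.compr₂_apply, LinearMap.compl₁₂_apply, LinearMap.mul_apply',
      LinearEquiv.coe_coe]
    have hmulbb : mul (b i) (b j) = if i = j then b i else 0 := by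
      rw [hb i, hb j, horthζ i j]
    rw [hmulbb]
    funext k
    by_cases hij : i = j
    · subst hij
      rw [if_pos rfl]
      by_cases hk : i = k <;> simp [Module.Basis.equivFun_self, hk, Pi.mul_apply]
    · rw [if_neg hij]
      by_cases hik : i = k
      · subst hik
        have : ¬ (j = i) := fun h => hij h.symm
        simp [Module.Basis.equivFun_self, this, Pi.mul_apply]
      · simp [Module.Basis.equivFun_self, hik, Pi.mul_apply]
  intro x y
  have h9 := LinearMap.congr_fun (LinearMap.congr_fun hbil x) y
  simpa only [LinearMap.compr₂_apply, LinearMap.compl₁₂_apply, LinearMap.mul_apply',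
    LinearEquiv.coe_coe] using h9
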